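/- Let π be a holomorphic toric Poisson structure on X = ℂPⁿ with associated Π ∈ ∧²N_ℂ, and d_π = [π,·]. Then: (1) for any I ∈ S_k (0 ≤ k ≤ n) with (ι_I Π)∧ℰ_I = 0, one has d_π(V_I^k) = 0; (2) for any I ∈ S_{k−1} ⊆ S_k (1 ≤ k ≤ n) with (ι_I Π)∧ℰ_I ≠ 0, if Ψ ∈ V_I^k satisfies d_π(Ψ) = 0, then there exists Φ ∈ V_I^{k−1} with Ψ = d_π(Φ). -/

import Mathlib

/-!
Formalization of statements from "Poisson Cohomology of holomorphic toric Poisson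
manifolds. I." (W. Hong).

Modeling conventions.  Mathlib has no holomorphic geometry of ℂPⁿ, so we use the
standard faithful algebraic model: a holomorphic multivector field on a toric variety
is determined by its restriction to the dense open torus, where (in the invariant
frame and with Laurent-monomial coefficients) multivector fields form the algebra
`MV n = AddMonoidAlgebra (ExteriorAlgebra ℂ ℂⁿ) ℤⁿ`: the element `single I ω`
represents `χ^I ⊗ ω` (`χ^I` the Laurent monomial of weight `I`, `ω` a constant
multivector in the frame `v_1, …, v_n`, `v_i = ρ(e_i)`).  Multiplication is the
wedge product.  Similarly `AMV n` models multivector fields on ℂ^{n+1}∖{0} in the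
frame `u_i = z_i ∂/∂z_i`.  Holomorphic multivector fields on ℂPⁿ are defined as the
image under `p_*` of the k-vector fields on ℂ^{n+1} with homogeneous polynomial
coefficients of degree k (this is exactly the classical description of
`H⁰(ℂPⁿ, ∧ᵏ𝒯)`, due to Bondal).  The Schouten differential `d_π = [π,·]` of a
torus-invariant bivector `π = ρ(Π)` acts weightwise by
`[π, χ^I ⊗ ω] = χ^I ⊗ (ι(ι_I Π) ∧ ω)`.
-/

noncomputable section
open Finset

namespace CPn

variable (n : ℕ)

/-- Laurent multivector fields on the open torus (ℂ*)ⁿ ⊆ ℂPⁿ, in the invariant frame. -/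
abbrev MV := AddMonoidAlgebra (ExteriorAlgebra ℂ (Fin n → ℂ)) (Fin n → ℤ)

/-- Ambient model: multivector fields on ℂ^{n+1}∖{0} with Laurent-monomial
coefficients, in the frame u_i = z_i ∂/∂z_i. -/
abbrev AMV := AddMonoidAlgebra (ExteriorAlgebra ℂ (Fin (n+1) → ℂ)) (Fin (n+1) → ℤ)

/-- The Laurent monomial χ^I as a multivector field (of degree 0). -/
def χ (I : Fin n → ℤ) : MV n := AddMonoidAlgebra.single I 1

/-- The vectors e_0 = −(e_1+⋯+e_n), e_1, …, e_n in N_ℂ = ℂⁿ. -/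
def EE : Fin (n+1) → (Fin n → ℂ) :=
  Fin.cases (fun _ => -1) (fun j => Pi.single j 1)

/-- The holomorphic vector fields v_i = ρ(e_i) = p_*(z_i ∂/∂z_i), 0 ≤ i ≤ n. -/
def v (i : Fin (n+1)) : MV n :=
  AddMonoidAlgebra.single 0 (ExteriorAlgebra.ι ℂ (EE n i))

/-- W = span_ℂ{v_1,…,v_n} = ρ(N_ℂ). -/
def W : Submodule ℂ (MV n) :=
  Submodule.span ℂ {x | ∃ i : Fin (n+1), i ≠ 0 ∧ x = v n i}

/-- Extension of a weight I ∈ M ≅ ℤⁿ to (m_0, m_1, …, m_n), m_0 = −Σᵢ m_i, m_i = ⟨I,e_i⟩. -/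
def mext (I : Fin n → ℤ) : Fin (n+1) → ℤ :=
  Fin.cases (-(∑ j, I j)) I

/-- The set of indices 0 ≤ i ≤ n with m_i = −1. -/
def deg1Set (I : Fin n → ℤ) : Finset (Fin (n+1)) :=
  univ.filter fun i => mext n I i = -1

/-- |I| = number of entries of (m_0,…,m_n) equal to −1. -/
def wt (I : Fin n → ℤ) : ℕ := (deg1Set n I).card

/-- 𝒱_I = v_{i_1} ∧ ⋯ ∧ v_{i_l}, where m_{i_1},…,m_{i_l} are the entries equal to −1. -/
def VI (I : Fin n → ℤ) : MV n :=
  (((deg1Set n I).sort (· ≤ ·)).map (v n)).prod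

/-- χ^I · 𝒱_I. -/
def chiVI (I : Fin n → ℤ) : MV n := χ n I * VI n I

/-- ℰ_I = e_{i_1} ∧ ⋯ ∧ e_{i_l} ∈ ∧^l N_ℂ (inside the exterior algebra of N_ℂ). -/
def EI (I : Fin n → ℤ) : ExteriorAlgebra ℂ (Fin n → ℂ) :=
  (((deg1Set n I).sort (· ≤ ·)).map fun i => ExteriorAlgebra.ι ℂ (EE n i)).prod

/-- V_I^k = ℂ(χ^I·𝒱_I) ∧ W^{k−|I|}. -/
def VIk (I : Fin n → ℤ) (k : ℕ) : Submodule ℂ (MV n) :=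
  Submodule.span ℂ {chiVI n I} * (W n) ^ (k - wt n I)

/-- u_i = z_i ∂/∂z_i on ℂ^{n+1}. -/
def uu (i : Fin (n+1)) : AMV n :=
  AddMonoidAlgebra.single 0 (ExteriorAlgebra.ι ℂ (Pi.single i 1))

/-- The Euler vector field e⃗ = Σ_i z_i ∂/∂z_i. -/
def eulerA : AMV n := ∑ i, uu n i

/-- The derivative of p : ℂ^{n+1}∖{0} → ℂPⁿ on the invariant frame:
the frame vector of u_i is sent to e_i (so e_0 = −Σ e_j); in coordinates
w ↦ (w_j − w_0)_{1≤j≤n}. -/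
def q : (Fin (n+1) → ℂ) →ₗ[ℂ] (Fin n → ℂ) :=
  LinearMap.pi fun j =>
    (LinearMap.proj j.succ : (Fin (n+1) → ℂ) →ₗ[ℂ] ℂ) -
      (LinearMap.proj (0 : Fin (n+1)) : (Fin (n+1) → ℂ) →ₗ[ℂ] ℂ)

/-- Pushforward p_* along p : ℂ^{n+1}∖{0} → ℂPⁿ (on torus-invariant fields, i.e.
those of weight a with Σ a = 0, this is the honest pushforward; the weight a
corresponds to the monomial of weight (a_1,…,a_n) in the coordinates t_j = z_j/z_0). -/
def pstar : AMV n →ₗ[ℂ] MV n :=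
  (Finsupp.lsum ℂ fun (a : Fin (n+1) → ℤ) =>
    (AddMonoidAlgebra.lsingle (fun j : Fin n => a j.succ) :
        ExteriorAlgebra ℂ (Fin n → ℂ) →ₗ[ℂ] MV n) ∘ₗ
      (ExteriorAlgebra.map (q n)).toLinearMap) ∘ₗ
    (AddMonoidAlgebra.coeffLinearEquiv ℂ).toLinearMap

/-- u_{i_1} ∧ ⋯ ∧ u_{i_k} for T = {i_1 < ⋯ < i_k} (constant-coefficient part). -/
def wedgeT (T : Finset (Fin (n+1))) : ExteriorAlgebra ℂ (Fin (n+1) → ℂ) :=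
  ((T.sort (· ≤ ·)).map fun i => ExteriorAlgebra.ι ℂ (Pi.single i 1)).prod

/-- F̃_k: the k-vector fields on ℂ^{n+1} whose coefficients in the frame
∂_{i_1}∧⋯∧∂_{i_k} are homogeneous polynomials of degree k, restricted to the torus
(z^b ∂_T = z^{b−ε_T} u_T). -/
def Ftilde (k : ℕ) : Submodule ℂ (AMV n) :=
  Submodule.span ℂ
    { x | ∃ (b : Fin (n+1) → ℕ) (T : Finset (Fin (n+1))), T.card = k ∧ (∑ i, b i) = k ∧
        x = AddMonoidAlgebra.single (fun i => (b i : ℤ) - (if i ∈ T then 1 else 0)) (wedgeT n T) }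

/-- H⁰(ℂPⁿ, ∧ᵏ𝒯) = p_*(F̃_k): holomorphic k-vector fields on ℂPⁿ. -/
def H0 (k : ℕ) : Submodule ℂ (MV n) := Submodule.map (pstar n) (Ftilde n k)

/-- ι_I Π ∈ N_ℂ for Π = Σ_{i<j} a i j · e_i∧e_j, where
ι_I (e_i∧e_j) = ⟨I,e_i⟩e_j − ⟨I,e_j⟩e_i. -/
def contr (a : Fin n → Fin n → ℂ) (I : Fin n → ℤ) : Fin n → ℂ := fun j =>
  ∑ p ∈ univ.filter (fun p : Fin n × Fin n => p.1 < p.2),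
    a p.1 p.2 * ((I p.1 : ℂ) * (if p.2 = j then 1 else 0) -
      (I p.2 : ℂ) * (if p.1 = j then 1 else 0))

/-- The toric bivector field π = Σ_{1≤i<j≤n} a i j · v_i ∧ v_j. -/
def piT (a : Fin n → Fin n → ℂ) : MV n :=
  ∑ p ∈ univ.filter (fun p : Fin n × Fin n => p.1 < p.2),
    a p.1 p.2 • (v n p.1.succ * v n p.2.succ)

/-- The Poisson differential d_π = [π, ·] (Schouten bracket with π = ρ(Π)):
on the toric frame it is given weightwise by [π, χ^I ⊗ ω] = χ^I ⊗ (ι(ι_I Π) ∧ ω). -/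
def dPi (a : Fin n → Fin n → ℂ) : MV n →ₗ[ℂ] MV n :=
  (Finsupp.lsum ℂ fun (I : Fin n → ℤ) =>
    (AddMonoidAlgebra.lsingle I : ExteriorAlgebra ℂ (Fin n → ℂ) →ₗ[ℂ] MV n) ∘ₗ
      LinearMap.mulLeft ℂ (ExteriorAlgebra.ι ℂ (contr n a I))) ∘ₗ
    (AddMonoidAlgebra.coeffLinearEquiv ℂ).toLinearMap

/-- S_k : weights I with all m_i ≥ −1 (0 ≤ i ≤ n) and |I| ≤ k. -/
def Sk (k : ℕ) : Set (Fin n → ℤ) := {I | (∀ i, -1 ≤ mext n I i) ∧ wt n I ≤ k}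

/-- S(k) : weights I with all m_i ≥ −1 (0 ≤ i ≤ n) and |I| = k. -/
def Slevel (k : ℕ) : Set (Fin n → ℤ) := {I | (∀ i, -1 ≤ mext n I i) ∧ wt n I = k}

/-- S_k(π) : I ∈ S_k satisfying (ι_I Π) ∧ ℰ_I = 0. -/
def SkPi (a : Fin n → Fin n → ℂ) (k : ℕ) : Set (Fin n → ℤ) :=
  {I | I ∈ Sk n k ∧ ExteriorAlgebra.ι ℂ (contr n a I) * EI n I = 0}

/-- S(k,π) : I with |I| = k, all m_i ≥ −1, satisfying (ι_I Π) ∧ ℰ_I = 0. -/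
def SlevelPi (a : Fin n → Fin n → ℂ) (k : ℕ) : Set (Fin n → ℤ) :=
  {I | I ∈ Slevel n k ∧ ExteriorAlgebra.ι ℂ (contr n a I) * EI n I = 0}

/-- Poisson cocycles in degree k: holomorphic k-vector fields killed by d_π. -/
def cocycles (a : Fin n → Fin n → ℂ) (k : ℕ) : Submodule ℂ (MV n) :=
  H0 n k ⊓ LinearMap.ker (dPi n a)

/-- Poisson coboundaries in degree k: d_π of the holomorphic (k−1)-vector fields. -/
def cobound (a : Fin n → Fin n → ℂ) : ℕ → Submodule ℂ (MV n)
  | 0 => ⊥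
  | (k+1) => Submodule.map (dPi n a) (H0 n k)

/-- The coefficient matrix of the standard Poisson structure π_st = Σ_{1≤i<j≤n} v_i∧v_j. -/
def aST : Fin n → Fin n → ℂ := fun _ _ => 1

/-! ### Auxiliary machinery for Statement 13 -/

section Aux13
open ExteriorAlgebra

/-- The exterior algebra of N_ℂ = ℂⁿ. -/
abbrev ExtA (n : ℕ) := ExteriorAlgebra ℂ (Fin n → ℂ)

/-- The degree-one part ι(N_ℂ) as a submodule of the exterior algebra. -/
def PP (n : ℕ) : Submodule ℂ (ExtA n) :=
  LinearMap.range (ι ℂ : (Fin n → ℂ) →ₗ[ℂ] ExtA n)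

/-- The algebra map `x ↦ single 0 x` from constant multivectors to `MV n`. -/
abbrev εA (n : ℕ) : ExtA n →ₐ[ℂ] MV n := AddMonoidAlgebra.singleZeroAlgHom

lemma εA_apply (n : ℕ) (x : ExtA n) : εA n x = AddMonoidAlgebra.single 0 x := rfl

lemma dPi_single (n : ℕ) (a : Fin n → Fin n → ℂ) (I : Fin n → ℤ) (ω : ExtA n) :
    dPi n a (AddMonoidAlgebra.single I ω)
      = AddMonoidAlgebra.single I (ι ℂ (contr n a I) * ω) := by
  simp [dPi]

lemma VI_eq (n : ℕ) (I : Fin n → ℤ) : VI n I = εA n (EI n I) := by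
  rw [VI, EI, map_list_prod, List.map_map]
  rfl

lemma chiVI_eq (n : ℕ) (I : Fin n → ℤ) :
    chiVI n I = AddMonoidAlgebra.single I (EI n I) := by
  rw [chiVI, χ, VI_eq, εA_apply, AddMonoidAlgebra.single_mul_single, add_zero, one_mul]

lemma PP_eq_span (n : ℕ) :
    PP n = Submodule.span ℂ (Set.range fun j : Fin n => ι ℂ (Pi.single j 1)) := by
  rw [PP, LinearMap.range_eq_map, ← (Pi.basisFun ℂ (Fin n)).span_eq, Submodule.map_span]
  congr 1
  ext x
  simp [Pi.basisFun_apply]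

lemma W_eq (n : ℕ) : W n = Submodule.map (εA n).toLinearMap (PP n) := by
  rw [W, PP_eq_span, Submodule.map_span]
  congr 1
  ext x
  simp only [Set.mem_setOf_eq, Set.mem_image, Set.mem_range, exists_exists_eq_and]
  constructor
  · rintro ⟨i, hi, rfl⟩
    induction i using Fin.cases with
    | zero => exact absurd rfl hi
    | succ j => exact ⟨j, by simp [v, EE, εA_apply]⟩
  · rintro ⟨j, rfl⟩
    exact ⟨j.succ, Fin.succ_ne_zero j, by simp [v, EE, εA_apply]⟩

lemma mem_VIk_iff (n : ℕ) (I : Fin n → ℤ) (k : ℕ) (Ψ : MV n) :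
    Ψ ∈ VIk n I k ↔
      ∃ σ ∈ PP n ^ (k - wt n I), Ψ = AddMonoidAlgebra.single I (EI n I * σ) := by
  rw [VIk, W_eq, ← Submodule.map_pow, chiVI_eq, Submodule.mem_span_singleton_mul]
  constructor
  · rintro ⟨z, hz, rfl⟩
    obtain ⟨σ, hσ, rfl⟩ := hz
    refine ⟨σ, hσ, ?_⟩
    rw [AlgHom.toLinearMap_apply, εA_apply, AddMonoidAlgebra.single_mul_single, add_zero]
  · rintro ⟨σ, hσ, rfl⟩
    refine ⟨εA n σ, Submodule.mem_map_of_mem hσ, ?_⟩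
    rw [εA_apply, AddMonoidAlgebra.single_mul_single, add_zero]

lemma ι_mul_list_prod (n : ℕ) (L : List (Fin n → ℂ)) (b : Fin n → ℂ) (hb : b ∈ L) :
    ι ℂ b * (L.map (ι ℂ)).prod = 0 := by
  induction L with
  | nil => exact absurd hb List.not_mem_nil
  | cons c t ih =>
    rw [List.map_cons, List.prod_cons]
    rcases List.mem_cons.mp hb with h | h
    · subst h
      rw [← mul_assoc, ι_sq_zero, zero_mul]
    · have hswap : ι ℂ b * ι ℂ c = -(ι ℂ c * ι ℂ b) :=
        eq_neg_of_add_eq_zero_left (ι_add_mul_swap b c)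
      rw [← mul_assoc, hswap, neg_mul, mul_assoc, ih h, mul_zero, neg_zero]

lemma ι_mul_list_prod_span (n : ℕ) (L : List (Fin n → ℂ)) (x : Fin n → ℂ)
    (hx : x ∈ Submodule.span ℂ {y | y ∈ L}) :
    ι ℂ x * (L.map (ι ℂ)).prod = 0 := by
  induction hx using Submodule.span_induction with
  | mem y hy => exact ι_mul_list_prod n L y hy
  | zero => rw [map_zero, zero_mul]
  | add y z _ _ hy hz => rw [map_add, add_mul, hy, hz, add_zero]
  | smul c y _ hy => rw [map_smul, smul_mul_assoc, hy, smul_zero]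

lemma exists_dual_aux {V : Type} [AddCommGroup V] [Module ℂ V] {U : Submodule ℂ V}
    {x : V} (hx : x ∉ U) : ∃ d : Module.Dual ℂ V, d x = 1 ∧ ∀ u ∈ U, d u = 0 := by
  have h0 : Submodule.Quotient.mk (p := U) x ≠ 0 := by
    simpa [Submodule.Quotient.mk_eq_zero] using hx
  have h := (Module.forall_dual_apply_eq_zero_iff ℂ
    (Submodule.Quotient.mk (p := U) x)).not.mpr h0
  push_neg at h
  obtain ⟨g, hg⟩ := h
  refine ⟨(g (Submodule.Quotient.mk x))⁻¹ • (g ∘ₗ U.mkQ), ?_, ?_⟩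
  · simp [inv_mul_cancel₀ hg]
  · intro u hu
    simp [Submodule.mkQ_apply, (Submodule.Quotient.mk_eq_zero U).2 hu]

lemma contract_mem_pow (n : ℕ) (d : Module.Dual ℂ (Fin n → ℂ)) :
    ∀ (m : ℕ) (y : ExtA n), y ∈ PP n ^ (m + 1) →
      CliffordAlgebra.contractLeft d y ∈ PP n ^ m := by
  intro m
  induction m with
  | zero =>
    intro y hy
    rw [pow_one] at hy
    obtain ⟨w, rfl⟩ := hy
    rw [CliffordAlgebra.contractLeft_ι 0 d w, pow_zero]
    exact Submodule.algebraMap_mem (d w)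
  | succ m ih =>
    intro y hy
    rw [pow_succ'] at hy
    refine Submodule.mul_induction_on hy ?_ ?_
    · rintro p ⟨w, rfl⟩ q hq
      rw [CliffordAlgebra.contractLeft_ι_mul d w q]
      refine sub_mem (Submodule.smul_mem _ _ hq) ?_
      rw [pow_succ']
      exact Submodule.mul_mem_mul ⟨w, rfl⟩ (ih q hq)
    · intro y z hy hz
      rw [map_add]
      exact add_mem hy hz

lemma contract_list_mul (n : ℕ) (d : Module.Dual ℂ (Fin n → ℂ))
    (L : List (Fin n → ℂ)) (hL : ∀ b ∈ L, d b = 0) (σ : ExtA n) :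
    CliffordAlgebra.contractLeft d ((L.map (ι ℂ)).prod * σ)
      = ((-1 : ℂ) ^ L.length) • ((L.map (ι ℂ)).prod * CliffordAlgebra.contractLeft d σ) := by
  induction L with
  | nil => simp
  | cons c t ih =>
    have hdc : d c = 0 := hL c List.mem_cons_self
    rw [List.map_cons, List.prod_cons, List.length_cons, mul_assoc,
      CliffordAlgebra.contractLeft_ι_mul d c ((t.map (ι ℂ)).prod * σ),
      ih (fun b hb => hL b (List.mem_cons_of_mem c hb)), hdc, zero_smul, zero_sub,
      mul_smul_comm, ← neg_smul, pow_succ, mul_neg_one, neg_smul, mul_assoc, neg_smul]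

lemma key_lemma (n : ℕ) (L : List (Fin n → ℂ)) (x : Fin n → ℂ)
    (hxE : ι ℂ x * (L.map (ι ℂ)).prod ≠ 0) (m : ℕ) (σ : ExtA n)
    (hσ : σ ∈ PP n ^ (m + 1))
    (hz : ι ℂ x * ((L.map (ι ℂ)).prod * σ) = 0) :
    ∃ τ ∈ PP n ^ m,
      (L.map (ι ℂ)).prod * σ = ι ℂ x * ((L.map (ι ℂ)).prod * τ) := by
  have hx : x ∉ Submodule.span ℂ {y | y ∈ L} :=
    fun h => hxE (ι_mul_list_prod_span n L x h)
  obtain ⟨d, hd1, hd0⟩ := exists_dual_aux hx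
  have hdb : ∀ b ∈ L, d b = 0 := fun b hb => hd0 b (Submodule.subset_span hb)
  have h1 := CliffordAlgebra.contractLeft_ι_mul d x ((L.map (ι ℂ)).prod * σ)
  rw [hz, map_zero, hd1, one_smul] at h1
  have h2 : (L.map (ι ℂ)).prod * σ
      = ι ℂ x * CliffordAlgebra.contractLeft d ((L.map (ι ℂ)).prod * σ) :=
    sub_eq_zero.mp h1.symm
  rw [contract_list_mul n d L hdb σ] at h2
  refine ⟨((-1 : ℂ) ^ L.length) • CliffordAlgebra.contractLeft d σ,
    Submodule.smul_mem _ _ (contract_mem_pow n d m σ hσ), ?_⟩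
  rw [h2]
  congr 1
  exact (mul_smul_comm ((-1 : ℂ) ^ L.length) ((L.map (ι ℂ)).prod) _).symm

lemma EI_eq_list (n : ℕ) (I : Fin n → ℤ) :
    EI n I = ((((deg1Set n I).sort (· ≤ ·)).map (EE n)).map (ι ℂ)).prod := by
  rw [EI, List.map_map]
  rfl

end Aux13

/-- (1) For I ∈ S_k (0 ≤ k ≤ n) with (ι_I Π)∧ℰ_I = 0 one has
d_π(V_I^k) = 0.  (2) For I ∈ S_{k−1} ⊆ S_k (1 ≤ k ≤ n) with (ι_I Π)∧ℰ_I ≠ 0, every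
Ψ ∈ V_I^k with d_π(Ψ) = 0 is of the form Ψ = d_π(Φ) with Φ ∈ V_I^{k−1}. -/
theorem dPi_on_weight_spaces (n : ℕ) (a : Fin n → Fin n → ℂ) :
    (∀ k ≤ n, ∀ I ∈ Sk n k,
      ExteriorAlgebra.ι ℂ (contr n a I) * EI n I = 0 →
        Submodule.map (dPi n a) (VIk n I k) = ⊥) ∧
    (∀ k, 1 ≤ k → k ≤ n → ∀ I ∈ Sk n (k-1),
      ExteriorAlgebra.ι ℂ (contr n a I) * EI n I ≠ 0 →
        ∀ Ψ ∈ VIk n I k, dPi n a Ψ = 0 →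
          ∃ Φ ∈ VIk n I (k-1), Ψ = dPi n a Φ) := by
  constructor
  · intro k hk I hI h0
    rw [Submodule.eq_bot_iff]
    rintro y ⟨Ψ, hΨ, rfl⟩
    obtain ⟨σ, hσ, rfl⟩ := (mem_VIk_iff n I k Ψ).mp hΨ
    rw [dPi_single, ← mul_assoc, h0, zero_mul, AddMonoidAlgebra.single_zero]
  · intro k hk1 hkn I hI hne Ψ hΨ hdΨ
    obtain ⟨σ, hσ, rfl⟩ := (mem_VIk_iff n I k _).mp hΨ
    rw [dPi_single] at hdΨ
    rw [AddMonoidAlgebra.single_eq_zero] at hdΨ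
    have hz : ExteriorAlgebra.ι ℂ (contr n a I) * (EI n I * σ) = 0 := hdΨ
    have hl : wt n I ≤ k - 1 := hI.2
    have hm : k - wt n I = (k - 1 - wt n I) + 1 := by omega
    rw [hm] at hσ
    rw [EI_eq_list] at hne hz
    obtain ⟨τ, hτ, heq⟩ := key_lemma n _ _ hne _ σ hσ hz
    refine ⟨AddMonoidAlgebra.single I (EI n I * τ), ?_, ?_⟩
    · exact (mem_VIk_iff n I (k-1) _).mpr ⟨τ, hτ, rfl⟩
    · rw [dPi_single, EI_eq_list, heq]


end CPn
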